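/- Let U be a diagonal n×n matrix with eigenvalues λ(U) ∈ Γ_k ordered U_{11} ≥ U_{22} ≥ ... ≥ U_{nn}, 0 ≤ l ≤ k-1, k ≥ 3, and F(U) = [σ_k(λ(U))/σ_l(λ(U))]^{1/(k-l)}. Then the diagonal derivatives satisfy F^{11} ≤ F^{22} ≤ ... ≤ F^{nn}, i.e., ∂F/∂U_{ii} is monotone nonincreasing in U_{ii}. -/

import Mathlib

open Finset

/-- The k-th elementary symmetric function of x = (x_1,...,x_n). -/
noncomputable def esymm (n k : ℕ) (x : Fin n → ℝ) : ℝ :=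
  ∑ s ∈ (Finset.univ : Finset (Fin n)).powersetCard k, ∏ i ∈ s, x i

/-- σ_k(x | i): the k-th elementary symmetric function of x with the i-th entry deleted. -/
noncomputable def esymmDel (n k : ℕ) (x : Fin n → ℝ) (i : Fin n) : ℝ :=
  ∑ s ∈ ((Finset.univ : Finset (Fin n)).erase i).powersetCard k, ∏ j ∈ s, x j

/-- The Garding cone Γ_k = {x : σ_j(x) > 0 for all 1 ≤ j ≤ k}. -/
def gardingCone (n k : ℕ) : Set (Fin n → ℝ) :=
  {x | ∀ j : ℕ, 1 ≤ j → j ≤ k → 0 < esymm n j x}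

/-- σ_k for integer index, with the convention σ_k = 0 for k < 0. -/
noncomputable def esymmZ (n : ℕ) (k : ℤ) (x : Fin n → ℝ) : ℝ :=
  if k < 0 then 0 else esymm n k.toNat x

/-- σ_k(x|i) for integer index, with the convention σ_k = 0 for k < 0. -/
noncomputable def esymmDelZ (n : ℕ) (k : ℤ) (x : Fin n → ℝ) (i : Fin n) : ℝ :=
  if k < 0 then 0 else esymmDel n k.toNat x i

namespace Fii
open Polynomial

/-! ### Multiset elementary symmetric function basics -/

lemma mesymm_cons (a : ℝ) (s : Multiset ℝ) (k : ℕ) :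
    (a ::ₘ s).esymm (k+1) = s.esymm (k+1) + a * s.esymm k := by
  simp only [Multiset.esymm, Multiset.powersetCard_cons, Multiset.map_add, Multiset.sum_add,
    Multiset.map_map, Function.comp_def, Multiset.prod_cons]
  rw [Multiset.sum_map_mul_left]

lemma mesymm_zero (s : Multiset ℝ) : s.esymm 0 = 1 := by
  simp [Multiset.esymm, Multiset.powersetCard_zero_left]

lemma mesymm_eq_zero (s : Multiset ℝ) {k : ℕ} (h : Multiset.card s < k) : s.esymm k = 0 := by
  simp [Multiset.esymm, Multiset.powersetCard_eq_empty _ h]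

lemma mesymm_one (s : Multiset ℝ) : s.esymm 1 = s.sum := by
  induction s using Multiset.induction with
  | empty => rw [mesymm_eq_zero _ (by simp)]; simp
  | cons a s ih => rw [show (1:ℕ) = 0 + 1 from rfl, mesymm_cons]; simp [ih, mesymm_zero, add_comm]

lemma mesymm_card (s : Multiset ℝ) : s.esymm (Multiset.card s) = s.prod := by
  induction s using Multiset.induction with
  | empty => simp [Multiset.esymm, Multiset.powersetCard_zero_left]
  | cons a s ih =>
    have h1 : (a ::ₘ s).esymm (Multiset.card s + 1)
        = s.esymm (Multiset.card s + 1) + a * s.esymm (Multiset.card s) := by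
      simp only [Multiset.esymm, Multiset.powersetCard_cons, Multiset.map_add, Multiset.sum_add,
        Multiset.map_map, Function.comp_def, Multiset.prod_cons]
      rw [Multiset.sum_map_mul_left]
    have h2 : s.esymm (Multiset.card s + 1) = 0 := by
      simp [Multiset.esymm, Multiset.powersetCard_eq_empty _ (Nat.lt_succ_self _)]
    simp [h1, h2, ih]

lemma msum_sq_le (s : Multiset ℝ) :
    s.sum ^ 2 ≤ (Multiset.card s : ℝ) * (s.map (· ^ 2)).sum := by
  induction s using Multiset.induction with
  | empty => simp
  | cons a s ih =>
    rcases Nat.eq_zero_or_pos (Multiset.card s) with h0 | h0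
    · rw [Multiset.card_eq_zero] at h0
      subst h0; simp
    simp only [Multiset.sum_cons, Multiset.card_cons, Multiset.map_cons, Nat.cast_add,
      Nat.cast_one]
    set c : ℝ := (Multiset.card s : ℝ) with hc
    set Q : ℝ := (s.map (· ^ 2)).sum with hq
    have hcpos : 0 < c := by rw [hc]; exact_mod_cast h0
    have h2 : (c+1) * s.sum^2 ≤ (c+1) * (c * Q) :=
      mul_le_mul_of_nonneg_left ih (by linarith)
    rw [← mul_le_mul_iff_right₀ hcpos]
    nlinarith [sq_nonneg (c * a - s.sum), h2]

lemma mesymm_two (s : Multiset ℝ) :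
    2 * s.esymm 2 = s.esymm 1 ^ 2 - (s.map (· ^ 2)).sum := by
  induction s using Multiset.induction with
  | empty => rw [mesymm_eq_zero _ (by simp : Multiset.card (0 : Multiset ℝ) < 2),
      mesymm_eq_zero _ (by simp : Multiset.card (0 : Multiset ℝ) < 1)]; simp
  | cons a s ih =>
    rw [show (Multiset.esymm (a ::ₘ s) 2) = _ from mesymm_cons a s 1,
      show (Multiset.esymm (a ::ₘ s) 1) = _ from mesymm_cons a s 0]
    rw [show (0:ℕ)+1 = 1 from rfl] at *
    simp only [Multiset.map_cons, Multiset.sum_cons, mesymm_zero]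
    ring_nf
    ring_nf at ih
    nlinarith [ih]

lemma mesymm_inv (s : Multiset ℝ) (h0 : (0:ℝ) ∉ s) :
    ∀ r, r ≤ Multiset.card s →
      (s.map (·⁻¹)).esymm r * s.prod = s.esymm (Multiset.card s - r) := by
  induction s using Multiset.induction with
  | empty =>
    intro r hr
    simp only [Multiset.card_zero, Nat.le_zero] at hr
    subst hr
    simp [mesymm_zero]
  | cons a s ih =>
    intro r hr
    have ha : a ≠ 0 := fun h => h0 (by simp [h])
    have h0s : (0:ℝ) ∉ s := fun h => h0 (Multiset.mem_cons_of_mem h)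
    have hcard' : Multiset.card (s.map (·⁻¹)) = Multiset.card s := Multiset.card_map _ _
    rcases r with _ | r'
    · rw [Nat.sub_zero, mesymm_card, mesymm_zero, one_mul]
    · rw [Multiset.card_cons] at hr ⊢
      rw [Multiset.map_cons, mesymm_cons, add_mul, Multiset.prod_cons]
      have hr' : r' ≤ Multiset.card s := by omega
      rcases eq_or_lt_of_le hr' with he | hlt
      · rw [← he]
        rw [mesymm_eq_zero (s.map (·⁻¹)) (by omega)]
        have key : (s.map (·⁻¹)).esymm r' * s.prod = 1 := by
          rw [ih h0s r' (le_of_eq he), ← he, Nat.sub_self, mesymm_zero]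
        have hsub : r' + 1 - (r' + 1) = 0 := Nat.sub_self _
        rw [hsub, mesymm_zero]
        calc 0 * (a * s.prod) + a⁻¹ * (s.map (·⁻¹)).esymm r' * (a * s.prod)
            = a⁻¹ * a * ((s.map (·⁻¹)).esymm r' * s.prod) := by ring
          _ = 1 := by rw [key, inv_mul_cancel₀ ha]; ring
      · have e1 := ih h0s (r' + 1) hlt
        have e2 := ih h0s r' hr'
        have hsub : Multiset.card s + 1 - (r' + 1) = (Multiset.card s - (r' + 1)) + 1 := by omega
        rw [hsub, mesymm_cons]
        have hsub2 : Multiset.card s - (r' + 1) + 1 = Multiset.card s - r' := by omega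
        rw [hsub2]
        calc (s.map (·⁻¹)).esymm (r' + 1) * (a * s.prod)
              + a⁻¹ * (s.map (·⁻¹)).esymm r' * (a * s.prod)
            = a * ((s.map (·⁻¹)).esymm (r' + 1) * s.prod)
              + a⁻¹ * a * ((s.map (·⁻¹)).esymm r' * s.prod) := by ring
          _ = s.esymm (Multiset.card s - r') + a * s.esymm (Multiset.card s - (r' + 1)) := by
              rw [e1, e2, inv_mul_cancel₀ ha]; ring
end Fii
namespace Fii
open Polynomial

/-! ### The derivative trick: existence of a multiset with scaled esymm -/

lemma exists_deriv_multiset (s : Multiset ℝ) (hd : 1 ≤ Multiset.card s) :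
    ∃ s' : Multiset ℝ, Multiset.card s' = Multiset.card s - 1 ∧
      ∀ j : ℕ, (Multiset.card s : ℝ) * s'.esymm j
        = ((Multiset.card s - j : ℕ) : ℝ) * s.esymm j := by
  classical
  set d := Multiset.card s with hdd
  set p : ℝ[X] := (s.map (fun a => X + C a)).prod with hp
  have hmap : s.map (fun a : ℝ => X + C a) = (s.map Neg.neg).map (fun a => X - C a) := by
    rw [Multiset.map_map]
    refine Multiset.map_congr rfl ?_
    intro a _
    simp [sub_neg_eq_add]
  have hmonic : p.Monic := monic_multiset_prod_of_monic _ _ (fun a _ => monic_X_add_C a)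
  have hdeg : p.natDegree = d := by
    rw [hp, natDegree_multiset_prod_of_monic]
    · simp [Multiset.map_map, Function.comp_def, natDegree_X_add_C, hdd]
    · intro f hf
      obtain ⟨a, _, rfl⟩ := Multiset.mem_map.mp hf
      exact monic_X_add_C a
  have hroots : p.roots = s.map Neg.neg := by
    rw [hp, hmap, roots_multiset_prod_X_sub_C]
  have hcoeffp : ∀ k, k ≤ d → p.coeff k = s.esymm (d - k) := fun k hk =>
    Multiset.prod_X_add_C_coeff s hk
  set q := derivative p with hq
  have hpd : p.coeff d = 1 := by rw [← hdeg]; exact hmonic.coeff_natDegree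
  have hcoeffq : q.coeff (d-1) = (d : ℝ) := by
    rw [hq, coeff_derivative, show d - 1 + 1 = d by omega, hpd]
    push_cast [Nat.cast_sub hd]
    ring
  have hqne : q ≠ 0 := fun h => by
    rw [h, coeff_zero] at hcoeffq
    have hdpos : (0:ℝ) < (d:ℝ) := by exact_mod_cast hd
    exact hdpos.ne' hcoeffq.symm
  have hdegq : q.natDegree = d - 1 := by
    refine le_antisymm (hdeg ▸ natDegree_derivative_le p) ?_
    exact le_natDegree_of_ne_zero (by rw [hcoeffq]; exact Nat.cast_ne_zero.mpr (by omega))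
  have hcard_roots : Multiset.card q.roots = d - 1 := by
    refine le_antisymm (hdegq ▸ card_roots' q) ?_
    have h1 := Polynomial.card_roots_le_derivative p
    rw [hroots, ← hq] at h1
    simp only [Multiset.card_map] at h1
    rw [← hdd] at h1
    omega
  have hsplits : q.Splits := splits_iff_card_roots.mpr (by rw [hcard_roots, hdegq])
  have hlead : q.leadingCoeff = (d : ℝ) := by
    rw [leadingCoeff, hdegq, hcoeffq]
  set s' : Multiset ℝ := q.roots.map Neg.neg with hs'
  have hcards' : Multiset.card s' = d - 1 := by rw [hs', Multiset.card_map, hcard_roots]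
  have hqeq : q = C (d:ℝ) * (s'.map (fun a => X + C a)).prod := by
    have h1 := hsplits.eq_prod_roots
    rw [hlead] at h1
    rw [h1, hs', Multiset.map_map]
    refine congr_arg _ (congr_arg Multiset.prod (Multiset.map_congr rfl ?_))
    intro a _
    simp [sub_eq_add_neg]
  refine ⟨s', hcards', ?_⟩
  intro j
  rcases le_or_gt d j with hj | hj
  · rw [mesymm_eq_zero s' (by omega), show d - j = 0 by omega]
    simp
  · have e1 : q.coeff (d - 1 - j) = p.coeff (d - j) * ((d - j : ℕ) : ℝ) := by
      rw [hq, coeff_derivative]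
      norm_cast
      rw [show d - 1 - j + 1 = d - j by omega]
    have hle : d - 1 - j ≤ Multiset.card s' := by rw [hcards']; omega
    have e2 : q.coeff (d - 1 - j) = (d : ℝ) * s'.esymm j := by
      rw [hqeq, coeff_C_mul, Multiset.prod_X_add_C_coeff s' hle, hcards',
        show d - 1 - (d - 1 - j) = j by omega]
    rw [← e2, e1, hcoeffp (d - j) (by omega), show d - (d - j) = j by omega]
    ring
end Fii
namespace Fii
open Polynomial

/-! ### Newton's inequalities -/

lemma newton_one (s : Multiset ℝ) :
    2 * (Multiset.card s : ℝ) * s.esymm 2 ≤ ((Multiset.card s : ℝ) - 1) * s.esymm 1 ^ 2 := by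
  have h1 := mesymm_two s
  have h2 := msum_sq_le s
  rw [← mesymm_one s] at h2
  nlinarith [h1, h2]

lemma newton (s : Multiset ℝ) (j : ℕ) (hj : 1 ≤ j) :
    ((j:ℝ)+1) * ((Multiset.card s : ℝ) - j + 1) * (s.esymm (j-1) * s.esymm (j+1))
      ≤ (j:ℝ) * ((Multiset.card s : ℝ) - j) * s.esymm j ^ 2 := by
  classical
  obtain ⟨d, hd⟩ : ∃ d, Multiset.card s = d := ⟨_, rfl⟩
  induction d using Nat.strong_induction_on generalizing s j with
  | _ d IH =>
  rw [hd]
  rcases le_or_gt d j with hjd | hjd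
  · rcases eq_or_lt_of_le hjd with he | hlt
    · have h1 : s.esymm (j+1) = 0 := mesymm_eq_zero s (by omega)
      have h2 : (d:ℝ) - (j:ℝ) = 0 := by rw [he]; ring
      rw [h1, h2]
      simp
    · have h1 : s.esymm (j+1) = 0 := mesymm_eq_zero s (by omega)
      have h2 : s.esymm j = 0 := mesymm_eq_zero s (by omega)
      rw [h1, h2]
      simp
  · rcases eq_or_lt_of_le hj with hj1 | hj2
    · -- j = 1
      rw [← hj1]
      have h := newton_one s
      rw [hd] at h
      simp only [Nat.sub_self, mesymm_zero, Nat.cast_one]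
      nlinarith [h]
    · rcases eq_or_lt_of_le (by omega : j + 1 ≤ d) with hjd1 | hjd2
      · -- j = d - 1, use inversion
        by_cases h0 : (0:ℝ) ∈ s
        · have hprod : s.prod = 0 := Multiset.prod_eq_zero h0
          have h1 : s.esymm (j+1) = 0 := by
            rw [hjd1, ← hd, mesymm_card, hprod]
          rw [h1]
          have hDJ : (0:ℝ) ≤ (d:ℝ) - (j:ℝ) := by
            have : (j:ℝ) < (d:ℝ) := by exact_mod_cast hjd
            linarith
          have : (0:ℝ) ≤ (j:ℝ) * ((d:ℝ) - j) * s.esymm j ^ 2 := by positivity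
          nlinarith [this]
        · set t : Multiset ℝ := s.map (·⁻¹) with ht
          have hct : Multiset.card t = d := by rw [ht, Multiset.card_map, hd]
          have h := newton_one t
          rw [hct] at h
          have hprod2 : (0:ℝ) ≤ s.prod ^ 2 := sq_nonneg _
          have key := mul_le_mul_of_nonneg_right h hprod2
          have e1 : t.esymm 1 * s.prod = s.esymm (d - 1) := by
            have := mesymm_inv s h0 1 (by omega)
            rw [hd] at this; exact this
          have e2 : t.esymm 2 * s.prod = s.esymm (d - 2) := by
            have := mesymm_inv s h0 2 (by omega)
            rw [hd] at this; exact this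
          have eprod : s.prod = s.esymm d := by rw [← hd, mesymm_card]
          have hj1d : j - 1 = d - 2 := by omega
          have hjp1 : j + 1 = d := by omega
          have hDJ1 : (d:ℝ) - (j:ℝ) = 1 := by
            have : d = j + 1 := by omega
            rw [this]; push_cast; ring
          have hJ : (j:ℝ) = (d:ℝ) - 1 := by
            have : d = j + 1 := by omega
            rw [this]; push_cast; ring
          rw [hj1d, hjp1, hDJ1, hJ]
          calc ((d:ℝ) - 1 + 1) * (1 + 1) * (s.esymm (d-2) * s.esymm d)
              = 2 * (d:ℝ) * t.esymm 2 * s.prod ^ 2 := by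
                rw [← e2, ← eprod]; ring
            _ ≤ ((d:ℝ) - 1) * t.esymm 1 ^ 2 * s.prod ^ 2 := key
            _ = ((d:ℝ) - 1) * (t.esymm 1 * s.prod)^2 := by ring
            _ = ((d:ℝ) - 1) * 1 * s.esymm j ^ 2 := by
                rw [e1, show d - 1 = j from by omega]; ring
      · -- middle case: j + 2 ≤ d
        obtain ⟨s', hcs', hes'⟩ := exists_deriv_multiset s (by omega)
        rw [hd] at hes' hcs'
        have hIH := IH (d-1) (by omega) s' j hj hcs'
        rw [hcs'] at hIH
        set D := (d:ℝ) with hD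
        set J := (j:ℝ) with hJ
        have hDcast : ((d - 1 : ℕ) : ℝ) = D - 1 := by
          rw [hD]; rw [Nat.cast_sub (by omega)]; norm_num
        rw [hDcast] at hIH
        have key := mul_le_mul_of_nonneg_left hIH (sq_nonneg D)
        have c1 : ((d - (j-1) : ℕ) : ℝ) = D - J + 1 := by
          rw [Nat.cast_sub (by omega : j - 1 ≤ d), Nat.cast_sub (by omega : 1 ≤ j)]
          rw [hD, hJ]; push_cast; ring
        have c2 : ((d - j : ℕ) : ℝ) = D - J := by
          rw [Nat.cast_sub (by omega : j ≤ d)]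
        have c3 : ((d - (j+1) : ℕ) : ℝ) = D - J - 1 := by
          rw [Nat.cast_sub (by omega : j + 1 ≤ d)]
          rw [hD, hJ]; push_cast; ring
        have E1 : D * s'.esymm (j-1) = (D - J + 1) * s.esymm (j-1) := by
          rw [hes' (j-1), c1]
        have E2 : D * s'.esymm j = (D - J) * s.esymm j := by
          rw [hes' j, c2]
        have E3 : D * s'.esymm (j+1) = (D - J - 1) * s.esymm (j+1) := by
          rw [hes' (j+1), c3]
        have hpos : (0:ℝ) < (D - J) * (D - J - 1) := by
          have h1 : (J:ℝ) + 2 ≤ D := by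
            rw [hD, hJ]; exact_mod_cast hjd2
          nlinarith
        have step1 : (D - J) * (D - J - 1) * ((J+1) * (D - J + 1) * (s.esymm (j-1) * s.esymm (j+1)))
            ≤ (D - J) * (D - J - 1) * (J * (D - J) * s.esymm j ^ 2) := by
          calc (D - J) * (D - J - 1) * ((J+1) * (D - J + 1) * (s.esymm (j-1) * s.esymm (j+1)))
              = (J+1) * ((D-1) - J + 1) * ((D * s'.esymm (j-1)) * (D * s'.esymm (j+1))) := by
                rw [E1, E3]; ring
            _ = D^2 * ((J+1) * ((D-1) - J + 1) * (s'.esymm (j-1) * s'.esymm (j+1))) := by ring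
            _ ≤ D^2 * (J * ((D-1) - J) * s'.esymm j ^ 2) := key
            _ = J * ((D-1) - J) * (D * s'.esymm j)^2 := by ring
            _ = J * ((D-1) - J) * ((D - J) * s.esymm j)^2 := by rw [E2]
            _ = (D - J) * (D - J - 1) * (J * (D - J) * s.esymm j ^ 2) := by ring
        exact le_of_mul_le_mul_left step1 hpos

lemma newton_plain (s : Multiset ℝ) (j : ℕ) (hj : 1 ≤ j) :
    s.esymm (j-1) * s.esymm (j+1) ≤ s.esymm j ^ 2 := by
  rcases lt_or_ge (Multiset.card s) (j+1) with h | h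
  · rw [mesymm_eq_zero s h]
    simp [sq_nonneg]
  · rcases le_or_gt (s.esymm (j-1) * s.esymm (j+1)) 0 with hn | hp
    · exact hn.trans (sq_nonneg _)
    · have hN := newton s j hj
      have hJD : (j:ℝ) + 1 ≤ (Multiset.card s : ℝ) := by exact_mod_cast h
      have hJ1 : (1:ℝ) ≤ (j:ℝ) := by exact_mod_cast hj
      set D := (Multiset.card s : ℝ)
      set J := (j:ℝ)
      have h1 : J * (D - J) * (s.esymm (j-1) * s.esymm (j+1))
          ≤ (J+1) * (D - J + 1) * (s.esymm (j-1) * s.esymm (j+1)) := by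
        have : J * (D - J) ≤ (J+1) * (D - J + 1) := by nlinarith
        exact mul_le_mul_of_nonneg_right this hp.le
      have h2 : J * (D - J) * (s.esymm (j-1) * s.esymm (j+1)) ≤ J * (D - J) * s.esymm j ^2 :=
        h1.trans hN
      have hpos : 0 < J * (D - J) := by nlinarith
      exact le_of_mul_le_mul_left h2 hpos
end Fii
namespace Fii
open Polynomial

/-! ### Shift expansion -/

lemma mesymm_shift (s : Multiset ℝ) (t : ℝ) (j : ℕ) :
    (s.map (· + t)).esymm j
      = ∑ r ∈ Finset.range (j+1),
          (Nat.choose (Multiset.card s - r) (j - r) : ℝ) * t^(j-r) * s.esymm r := by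
  classical
  set d := Multiset.card s with hdd
  rcases lt_or_ge d j with hdj | hjd
  · rw [mesymm_eq_zero (s.map (· + t)) (by rw [Multiset.card_map]; omega)]
    symm
    refine Finset.sum_eq_zero ?_
    intro r hr
    rcases le_or_gt r d with hrd | hrd
    · rw [Nat.choose_eq_zero_of_lt (by omega)]
      simp
    · rw [mesymm_eq_zero s hrd]
      ring
  · set p : ℝ[X] := (s.map (fun a => X + C a)).prod with hp
    have hmonic : p.Monic := monic_multiset_prod_of_monic _ _ (fun a _ => monic_X_add_C a)
    have hdeg : p.natDegree = d := by
      rw [hp, natDegree_multiset_prod_of_monic]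
      · simp [Multiset.map_map, Function.comp_def, natDegree_X_add_C, hdd]
      · intro f hf
        obtain ⟨a, _, rfl⟩ := Multiset.mem_map.mp hf
        exact monic_X_add_C a
    have hcoeffp : ∀ m, m ≤ d → p.coeff m = s.esymm (d - m) := fun m hm =>
      Multiset.prod_X_add_C_coeff s hm
    have htaylor : Polynomial.taylor t p = ((s.map (· + t)).map (fun a => X + C a)).prod := by
      rw [taylor_apply, hp, multiset_prod_comp, Multiset.map_map, Multiset.map_map]
      refine congr_arg Multiset.prod (Multiset.map_congr rfl ?_)
      intro a _
      simp only [Function.comp_apply, add_comp, X_comp, C_comp, C_add]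
      ring
    have hLHS : (s.map (· + t)).esymm j = (Polynomial.taylor t p).coeff (d - j) := by
      rw [htaylor, Multiset.prod_X_add_C_coeff (s.map (· + t))
        (by rw [Multiset.card_map]; omega), Multiset.card_map, ← hdd,
        show d - (d - j) = j by omega]
    rw [hLHS, Polynomial.taylor_coeff]
    have hndeg : (Polynomial.hasseDeriv (d - j) p).natDegree < j + 1 := by
      have h1 := Polynomial.natDegree_hasseDeriv_le p (d - j)
      omega
    rw [Polynomial.eval_eq_sum_range' hndeg]
    have hterm : ∀ m ∈ Finset.range (j+1),
        (Polynomial.hasseDeriv (d - j) p).coeff m * t ^ m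
          = (Nat.choose (d - (j - m)) (j - (j - m)) : ℝ) * t^(j-(j-m)) * s.esymm (j - m) := by
      intro m hm
      rw [Finset.mem_range] at hm
      rw [Polynomial.hasseDeriv_coeff]
      have e1 : p.coeff (m + (d - j)) = s.esymm (j - m) := by
        rw [hcoeffp (m + (d - j)) (by omega), show d - (m + (d - j)) = j - m by omega]
      rw [e1, show j - (j - m) = m by omega, show d - (j - m) = m + (d - j) by omega]
      have e2 : Nat.choose (m + (d - j)) (d - j) = Nat.choose (m + (d - j)) m := by
        rw [← Nat.choose_symm (by omega : m ≤ m + (d - j)), show m + (d-j) - m = d - j by omega]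
      rw [e2]
      ring
    rw [Finset.sum_congr rfl hterm]
    rw [← Finset.sum_range_reflect
      (fun r => (Nat.choose (d - r) (j - r) : ℝ) * t^(j-r) * s.esymm r) (j+1)]
    refine Finset.sum_congr rfl ?_
    intro m hm
    rw [Finset.mem_range] at hm
    rw [show j + 1 - 1 - m = j - m by omega]
end Fii
namespace Fii

/-! ### Elementary symmetric functions over a finite index set -/

variable {n : ℕ}

noncomputable def E (A : Finset (Fin n)) (k : ℕ) (x : Fin n → ℝ) : ℝ :=
  ∑ s ∈ A.powersetCard k, ∏ i ∈ s, x i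

lemma E_eq (A : Finset (Fin n)) (k : ℕ) (x : Fin n → ℝ) :
    E A k x = (A.val.map x).esymm k := (Finset.esymm_map_val x A k).symm

lemma E_zero (A : Finset (Fin n)) (x : Fin n → ℝ) : E A 0 x = 1 := by
  simp [E, Finset.powersetCard_zero]

lemma E_eq_zero (A : Finset (Fin n)) {k : ℕ} (h : A.card < k) (x : Fin n → ℝ) :
    E A k x = 0 := by
  rw [E_eq]
  exact mesymm_eq_zero _ (by simpa using h)

lemma E_erase {A : Finset (Fin n)} {i : Fin n} (hi : i ∈ A) (k : ℕ) (x : Fin n → ℝ) :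
    E A (k+1) x = E (A.erase i) (k+1) x + x i * E (A.erase i) k x := by
  have hval : A.val.map x = x i ::ₘ ((A.erase i).val.map x) := by
    rw [Finset.erase_val, ← Multiset.map_cons, Multiset.cons_erase (by simpa using hi)]
  rw [E_eq, hval, mesymm_cons, ← E_eq, ← E_eq]

lemma E_pos {A : Finset (Fin n)} {k : ℕ} {x : Fin n → ℝ} (h : ∀ m ∈ A, 0 < x m)
    (hk : k ≤ A.card) : 0 < E A k x := by
  refine Finset.sum_pos ?_ (Finset.powersetCard_nonempty.mpr hk)
  intro s hs
  rw [Finset.mem_powersetCard] at hs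
  exact Finset.prod_pos fun m hm => h m (hs.1 hm)

lemma newton_E (A : Finset (Fin n)) (j : ℕ) (hj : 1 ≤ j) (x : Fin n → ℝ) :
    E A (j-1) x * E A (j+1) x ≤ E A j x ^ 2 := by
  rw [E_eq, E_eq, E_eq]
  exact newton_plain _ j hj

lemma E_shift (A : Finset (Fin n)) (j : ℕ) (x : Fin n → ℝ) (t : ℝ) :
    E A j (fun m => x m + t)
      = ∑ r ∈ Finset.range (j+1), (Nat.choose (A.card - r) (j - r) : ℝ) * t^(j-r) * E A r x := by
  rw [E_eq]
  have h1 : A.val.map (fun m => x m + t) = (A.val.map x).map (· + t) := by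
    rw [Multiset.map_map]; rfl
  rw [h1, mesymm_shift]
  simp only [Multiset.card_map]
  refine Finset.sum_congr rfl ?_
  intro r _
  rw [← E_eq]
  rfl

lemma E_shift_pos {A : Finset (Fin n)} {k : ℕ} {x : Fin n → ℝ}
    (hA : ∀ j, 1 ≤ j → j ≤ k → 0 < E A j x) {t : ℝ} (ht : 0 ≤ t) :
    ∀ j, 1 ≤ j → j ≤ k → 0 < E A j (fun m => x m + t) := by
  intro j hj1 hjk
  rw [E_shift]
  refine Finset.sum_pos' ?_ ⟨j, Finset.self_mem_range_succ j, ?_⟩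
  · intro r hr
    rcases Nat.eq_zero_or_pos r with h0 | h0
    · subst h0
      rw [E_zero]
      positivity
    · have := hA r h0 (by rw [Finset.mem_range] at hr; omega)
      positivity
  · rw [Nat.sub_self, pow_zero, Nat.choose_zero_right]
    have := hA j hj1 hjk
    simpa using this

lemma E_continuous (A : Finset (Fin n)) (j : ℕ) (x : Fin n → ℝ) :
    Continuous (fun t => E A j (fun m => x m + t)) := by
  have h1 : (fun t => E A j (fun m => x m + t))
      = fun t => ∑ r ∈ Finset.range (j+1),
          (Nat.choose (A.card - r) (j - r) : ℝ) * t^(j-r) * E A r x :=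
    funext fun t => E_shift A j x t
  rw [h1]
  exact continuous_finset_sum _ fun r _ =>
    (continuous_const.mul (continuous_pow _)).mul continuous_const
end Fii
namespace Fii

/-! ### Deleting an entry stays in the Garding cone -/

variable {n : ℕ}

lemma gamma_del_top : ∀ (k : ℕ), 1 ≤ k → ∀ (A : Finset (Fin n)) (x : Fin n → ℝ) (i : Fin n),
    i ∈ A → (∀ j, 1 ≤ j → j ≤ k → 0 < E A j x) → 0 < E (A.erase i) (k-1) x := by
  intro k
  induction k using Nat.strong_induction_on with
  | _ k IH =>
  intro hk1 A x i hiA hA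
  rcases eq_or_lt_of_le hk1 with hk1' | hk2
  · rw [← hk1']
    rw [show (1:ℕ) - 1 = 0 from rfl, E_zero]
    norm_num
  by_contra hneg
  push_neg at hneg
  have hkcard : k ≤ A.card := by
    by_contra hc
    push_neg at hc
    have h1 := hA k (by omega) le_rfl
    rw [E_eq_zero A hc x] at h1
    exact lt_irrefl _ h1
  set g : ℝ → ℝ := fun t => E (A.erase i) (k-1) (fun m => x m + t) with hg
  have hgc : Continuous g := E_continuous _ _ _
  set T : ℝ := 1 + ∑ m ∈ (Finset.univ : Finset (Fin n)), |x m| with hT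
  have hTpos : ∀ t, T ≤ t → ∀ m : Fin n, 0 < x m + t := by
    intro t ht m
    have h1 : |x m| ≤ ∑ m' ∈ (Finset.univ : Finset (Fin n)), |x m'| :=
      Finset.single_le_sum (fun m' _ => abs_nonneg (x m')) (Finset.mem_univ m)
    have h2 : -x m ≤ |x m| := neg_le_abs _
    rw [hT] at ht
    linarith
  have hgT : ∀ t, T ≤ t → 0 < g t := by
    intro t ht
    refine E_pos (fun m _ => hTpos t ht m) ?_
    rw [Finset.card_erase_of_mem hiA]
    omega
  set S : Set ℝ := {t | 0 ≤ t ∧ g t ≤ 0} with hS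
  have hx0 : (fun m => x m + 0) = x := by funext m; ring
  have hS0 : (0:ℝ) ∈ S := by
    refine ⟨le_refl 0, ?_⟩
    show g 0 ≤ 0
    rw [hg]
    simpa [hx0] using hneg
  have hbdd : BddAbove S := by
    refine ⟨T, ?_⟩
    intro t ht
    by_contra hc
    push_neg at hc
    exact absurd ht.2 (not_le.mpr (hgT t hc.le))
  have hSc : IsClosed S := by
    have : S = Set.Ici (0:ℝ) ∩ g ⁻¹' Set.Iic 0 := rfl
    rw [this]
    exact isClosed_Ici.inter (isClosed_Iic.preimage hgc)
  set t₀ : ℝ := sSup S with ht₀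
  have ht₀S : t₀ ∈ S := hSc.csSup_mem ⟨0, hS0⟩ hbdd
  have hgt : ∀ t, t₀ < t → 0 < g t := by
    intro t ht
    by_contra hc
    push_neg at hc
    have htS : t ∈ S := ⟨le_trans ht₀S.1 ht.le, hc⟩
    exact absurd (le_csSup hbdd htS) (not_le.mpr ht)
  have hge : 0 ≤ g t₀ := by
    refine ge_of_tendsto (hgc.continuousWithinAt :
      Filter.Tendsto g (nhdsWithin t₀ (Set.Ioi t₀)) (nhds (g t₀))) ?_
    exact eventually_nhdsWithin_of_forall (fun t ht => (hgt t ht).le)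
  have hg0 : g t₀ = 0 := le_antisymm ht₀S.2 hge
  set μ : Fin n → ℝ := fun m => x m + t₀ with hμdef
  have hμ : ∀ j, 1 ≤ j → j ≤ k → 0 < E A j μ := E_shift_pos hA ht₀S.1
  have hEg : E (A.erase i) (k-1) μ = 0 := hg0
  have hk2' : 0 < E (A.erase i) (k-2) μ := by
    rcases eq_or_lt_of_le (show 2 ≤ k from hk2) with hk2'' | hk3
    · rw [← hk2'']
      rw [show (2:ℕ) - 2 = 0 from rfl, E_zero]
      norm_num
    · have h1 := IH (k-1) (by omega) (by omega) A μ i hiA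
        (fun j h1 h2 => hμ j h1 (by omega))
      rwa [show k - 1 - 1 = k - 2 by omega] at h1
  have hnewton := newton_E (A.erase i) (k-1) (by omega) μ
  rw [hEg, show k - 1 - 1 = k - 2 by omega, show k - 1 + 1 = k by omega] at hnewton
  have hEk : E (A.erase i) k μ ≤ 0 := by
    have h0 : (0:ℝ) = 0 ^ 2 := by norm_num
    nlinarith [hnewton, hk2']
  have heq := E_erase hiA (k-1) μ
  rw [show k - 1 + 1 = k by omega, hEg, mul_zero, add_zero] at heq
  have hAk := hμ k (by omega) le_rfl
  rw [heq] at hAk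
  exact absurd hAk (not_lt.mpr hEk)

lemma gamma_del {A : Finset (Fin n)} {x : Fin n → ℝ} {i : Fin n} (hiA : i ∈ A) {k : ℕ}
    (hA : ∀ j, 1 ≤ j → j ≤ k → 0 < E A j x) :
    ∀ j, 1 ≤ j → j ≤ k - 1 → 0 < E (A.erase i) j x := by
  intro j h1 h2
  have h := gamma_del_top (j+1) (by omega) A x i hiA (fun r hr1 hr2 => hA r hr1 (by omega))
  simpa using h
end Fii
namespace Fii

/-! ### Chain of Newton-Maclaurin inequalities -/

variable {n : ℕ}

lemma ratio_chain {A : Finset (Fin n)} {x : Fin n → ℝ} {k : ℕ}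
    (hA : ∀ j, 1 ≤ j → j ≤ k → 0 < E A j x) :
    ∀ (d a : ℕ), 1 ≤ a → a + d ≤ k →
      E A (a+d) x * E A (a-1) x ≤ E A (a+d-1) x * E A a x := by
  intro d
  induction d with
  | zero =>
    intro a h1 h2
    rw [Nat.add_zero]
    exact le_of_eq (mul_comm _ _)
  | succ d IH =>
    intro a h1 h2
    have hIH := IH (a+1) (by omega) (by omega)
    rw [show a + 1 + d = a + (d+1) by omega, show a + (d+1) - 1 = a + d by omega,
      show a + 1 - 1 = a by omega] at hIH
    -- hIH : E A (a+(d+1)) x * E A a x ≤ E A (a+d) x * E A (a+1) x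
    have hstep := newton_E A a h1 x
    -- positivity facts
    have hb : 0 < E A (a + (d+1)) x := hA _ (by omega) (by omega)
    have ha : 0 < E A a x := hA a h1 (by omega)
    have ha1 : 0 < E A (a+1) x := hA _ (by omega) (by omega)
    have had : 0 < E A (a+d) x := hA _ (by omega) (by omega)
    have ham : 0 ≤ E A (a-1) x := by
      rcases Nat.eq_zero_or_pos (a-1) with h0 | h0
      · rw [h0, E_zero]; norm_num
      · exact (hA (a-1) h0 (by omega)).le
    rw [show a + (d+1) - 1 = a + d by omega]
    -- want : E A (a+(d+1)) x * E A (a-1) x ≤ E A (a+d) x * E A a x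
    have key : (E A (a+(d+1)) x * E A (a-1) x) * E A (a+1) x
        ≤ (E A (a+d) x * E A a x) * E A (a+1) x := by
      calc (E A (a+(d+1)) x * E A (a-1) x) * E A (a+1) x
          = E A (a+(d+1)) x * (E A (a-1) x * E A (a+1) x) := by ring
        _ ≤ E A (a+(d+1)) x * E A a x ^ 2 :=
            mul_le_mul_of_nonneg_left hstep hb.le
        _ = (E A (a+(d+1)) x * E A a x) * E A a x := by ring
        _ ≤ (E A (a+d) x * E A (a+1) x) * E A a x :=
            mul_le_mul_of_nonneg_right hIH ha.le
        _ = (E A (a+d) x * E A a x) * E A (a+1) x := by ring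
    exact le_of_mul_le_mul_right key ha1

lemma NMq {A : Finset (Fin n)} {x : Fin n → ℝ} {m : ℕ}
    (hA : ∀ j, 1 ≤ j → j ≤ m → 0 < E A j x) (l : ℕ) (hl1 : 1 ≤ l) (hlm : l ≤ m) :
    E A (m+1) x * E A (l-1) x ≤ E A m x * E A l x := by
  have hEl : 0 < E A l x := hA l hl1 hlm
  have hEm : 0 < E A m x := hA m (by omega) le_rfl
  have hElm : 0 ≤ E A (l-1) x := by
    rcases Nat.eq_zero_or_pos (l-1) with h0 | h0
    · rw [h0, E_zero]; norm_num
    · exact (hA (l-1) h0 (by omega)).le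
  rcases le_or_gt (E A (m+1) x) 0 with hm1 | hm1
  · calc E A (m+1) x * E A (l-1) x ≤ 0 := mul_nonpos_of_nonpos_of_nonneg hm1 hElm
      _ ≤ E A m x * E A l x := (mul_pos hEm hEl).le
  · have hA' : ∀ j, 1 ≤ j → j ≤ m + 1 → 0 < E A j x := by
      intro j h1 h2
      rcases eq_or_lt_of_le h2 with he | hlt
      · rw [he]; exact hm1
      · exact hA j h1 (by omega)
    have h := ratio_chain hA' (m + 1 - l) l hl1 (by omega)
    rw [show l + (m + 1 - l) = m + 1 by omega, show m + 1 - 1 = m from rfl] at h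
    exact h

lemma ML {A : Finset (Fin n)} {x : Fin n → ℝ} {k : ℕ} {i : Fin n} (hiA : i ∈ A)
    (hA : ∀ j, 1 ≤ j → j ≤ k → 0 < E A j x) (hk : 2 ≤ k)
    (l : ℕ) (hl1 : 1 ≤ l) (hlk : l ≤ k - 1) :
    E A k x * E (A.erase i) (l-1) x ≤ E (A.erase i) (k-1) x * E A l x := by
  have hdel : ∀ j, 1 ≤ j → j ≤ k - 1 → 0 < E (A.erase i) j x := gamma_del hiA hA
  have hNM := NMq (m := k - 1) hdel l hl1 hlk
  rw [show k - 1 + 1 = k by omega] at hNM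
  have hEk := E_erase hiA (k-1) x
  rw [show k - 1 + 1 = k by omega] at hEk
  have hEl := E_erase hiA (l-1) x
  rw [show l - 1 + 1 = l by omega] at hEl
  rw [hEk, hEl]
  nlinarith [hNM]

lemma E_del_diff {A : Finset (Fin n)} {i j : Fin n} (hi : i ∈ A) (hj : j ∈ A) (hij : i ≠ j)
    (m : ℕ) (x : Fin n → ℝ) :
    E (A.erase i) (m+1) x - E (A.erase j) (m+1) x
      = (x j - x i) * E ((A.erase i).erase j) m x := by
  have h1 : E (A.erase i) (m+1) x
      = E ((A.erase i).erase j) (m+1) x + x j * E ((A.erase i).erase j) m x :=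
    E_erase (Finset.mem_erase.mpr ⟨hij.symm, hj⟩) m x
  have h2 : E (A.erase j) (m+1) x
      = E ((A.erase j).erase i) (m+1) x + x i * E ((A.erase j).erase i) m x :=
    E_erase (Finset.mem_erase.mpr ⟨hij, hi⟩) m x
  rw [Finset.erase_right_comm] at h2
  rw [h1, h2]
  ring
end Fii
namespace Fii

variable {n : ℕ}

lemma esymm_eq_E (n k : ℕ) (x : Fin n → ℝ) : esymm n k x = E Finset.univ k x := rfl

lemma esymmDel_eq_E (n k : ℕ) (x : Fin n → ℝ) (i : Fin n) :
    esymmDel n k x i = E (Finset.univ.erase i) k x := rfl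

/-- The main monotonicity of the numerators. -/
lemma main_mono (n k l : ℕ) (hk3 : 3 ≤ k) (hkn : k ≤ n) (hl : l + 1 ≤ k)
    (x : Fin n → ℝ) (hx : x ∈ gardingCone n k)
    (hord : ∀ i j : Fin n, i ≤ j → x j ≤ x i)
    (i j : Fin n) (hij : i ≤ j) :
    esymmDel n (k - 1) x i * esymm n l x - esymm n k x * esymmDelZ n ((l : ℤ) - 1) x i
      ≤ esymmDel n (k - 1) x j * esymm n l x - esymm n k x * esymmDelZ n ((l : ℤ) - 1) x j := by
  rcases eq_or_lt_of_le hij with he | hlt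
  · rw [he]
  have hne : i ≠ j := Fin.ne_of_lt hlt
  have hA : ∀ r, 1 ≤ r → r ≤ k → 0 < E Finset.univ r x := fun r h1 h2 => hx r h1 h2
  have hcard : (Finset.univ : Finset (Fin n)).card = n := Finset.card_univ.trans (Fintype.card_fin n)
  have hxij : x j ≤ x i := hord i j hij
  have hiu : i ∈ (Finset.univ : Finset (Fin n)) := Finset.mem_univ i
  have hju : j ∈ (Finset.univ : Finset (Fin n)) := Finset.mem_univ j
  -- positivity of pair-deleted esymm
  have hdelj : ∀ r, 1 ≤ r → r ≤ k - 1 → 0 < E (Finset.univ.erase j) r x := gamma_del hju hA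
  have hiej : i ∈ Finset.univ.erase j := Finset.mem_erase.mpr ⟨hne, hiu⟩
  have hdelji : ∀ r, 1 ≤ r → r ≤ k - 2 → 0 < E ((Finset.univ.erase j).erase i) r x := by
    intro r h1 h2
    have := gamma_del hiej hdelj r h1 (by omega)
    exact this
  have hpairk2 : 0 < E ((Finset.univ.erase j).erase i) (k-2) x :=
    hdelji (k-2) (by omega) le_rfl
  -- difference of the σ_{k-1}-deleted terms
  have hdiffk : E (Finset.univ.erase j) (k-1) x - E (Finset.univ.erase i) (k-1) x
      = (x i - x j) * E ((Finset.univ.erase j).erase i) (k-2) x := by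
    have h := E_del_diff hju hiu hne.symm (k-2) x
    rw [show k - 2 + 1 = k - 1 by omega] at h
    exact h
  have hsigl : 0 < esymm n l x := by
    rcases Nat.eq_zero_or_pos l with h0 | h0
    · rw [h0, esymm_eq_E, E_zero]; norm_num
    · exact hA l h0 (by omega)
  have hsigk : 0 < esymm n k x := hA k (by omega) le_rfl
  rcases lt_or_ge l 2 with hl2 | hl2
  · -- l = 0 or l = 1 : the Z-terms coincide
    have hZ : esymmDelZ n ((l : ℤ) - 1) x i = esymmDelZ n ((l : ℤ) - 1) x j := by
      interval_cases l
      · simp [esymmDelZ]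
      · simp only [esymmDelZ]
        norm_num
        rw [esymmDel_eq_E, esymmDel_eq_E, E_zero, E_zero]
    rw [hZ]
    have hnum : esymmDel n (k-1) x i ≤ esymmDel n (k-1) x j := by
      rw [esymmDel_eq_E, esymmDel_eq_E, ← sub_nonneg]
      rw [show E (Finset.univ.erase j) (k-1) x - E (Finset.univ.erase i) (k-1) x
        = (x i - x j) * E ((Finset.univ.erase j).erase i) (k-2) x from hdiffk]
      have h1 : 0 ≤ x i - x j := by linarith
      positivity
    have := mul_le_mul_of_nonneg_right hnum hsigl.le
    linarith
  · -- 2 ≤ l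
    have hZi : esymmDelZ n ((l : ℤ) - 1) x i = E (Finset.univ.erase i) (l-1) x := by
      simp only [esymmDelZ]
      rw [if_neg (by omega), esymmDel_eq_E]
      congr 1
      omega
    have hZj : esymmDelZ n ((l : ℤ) - 1) x j = E (Finset.univ.erase j) (l-1) x := by
      simp only [esymmDelZ]
      rw [if_neg (by omega), esymmDel_eq_E]
      congr 1
      omega
    have hdiffl : E (Finset.univ.erase j) (l-1) x - E (Finset.univ.erase i) (l-1) x
        = (x i - x j) * E ((Finset.univ.erase j).erase i) (l-2) x := by
      have h := E_del_diff hju hiu hne.symm (l-2) x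
      rw [show l - 2 + 1 = l - 1 by omega] at h
      exact h
    -- the bracket inequality : σ_k ⬝ W_{l-2} ≤ W_{k-2} ⬝ σ_l
    set Wk : ℝ := E ((Finset.univ.erase j).erase i) (k-2) x with hWk
    set Wl : ℝ := E ((Finset.univ.erase j).erase i) (l-2) x with hWl
    have hWlpos : 0 ≤ Wl := by
      rcases Nat.eq_zero_or_pos (l-2) with h0 | h0
      · rw [hWl, h0, E_zero]; norm_num
      · exact (hdelji (l-2) h0 (by omega)).le
    have hBl1 : 0 < E (Finset.univ.erase j) (l-1) x := hdelj (l-1) (by omega) (by omega)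
    have hML1 : esymm n k x * E (Finset.univ.erase j) (l-1) x
        ≤ E (Finset.univ.erase j) (k-1) x * esymm n l x := by
      rw [esymm_eq_E, esymm_eq_E]
      exact ML hju hA (by omega) l (by omega) (by omega)
    have hML2 : E (Finset.univ.erase j) (k-1) x * Wl
        ≤ Wk * E (Finset.univ.erase j) (l-1) x := by
      have h := ML hiej hdelj (by omega : 2 ≤ k - 1) (l-1) (by omega)
        (by omega : l - 1 ≤ k - 1 - 1)
      rw [show k - 1 - 1 = k - 2 by omega, show l - 1 - 1 = l - 2 by omega] at h
      exact h
    have hbracket : esymm n k x * Wl ≤ Wk * esymm n l x := by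
      have t1 : esymm n k x * Wl * E (Finset.univ.erase j) (l-1) x
          ≤ Wk * esymm n l x * E (Finset.univ.erase j) (l-1) x := by
        calc esymm n k x * Wl * E (Finset.univ.erase j) (l-1) x
            = (esymm n k x * E (Finset.univ.erase j) (l-1) x) * Wl := by ring
          _ ≤ (E (Finset.univ.erase j) (k-1) x * esymm n l x) * Wl :=
              mul_le_mul_of_nonneg_right hML1 hWlpos
          _ = (E (Finset.univ.erase j) (k-1) x * Wl) * esymm n l x := by ring
          _ ≤ (Wk * E (Finset.univ.erase j) (l-1) x) * esymm n l x :=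
              mul_le_mul_of_nonneg_right hML2 hsigl.le
          _ = Wk * esymm n l x * E (Finset.univ.erase j) (l-1) x := by ring
      exact le_of_mul_le_mul_right t1 hBl1
    rw [hZi, hZj, esymmDel_eq_E, esymmDel_eq_E]
    have hfinal : (E (Finset.univ.erase j) (k-1) x * esymm n l x
          - esymm n k x * E (Finset.univ.erase j) (l-1) x)
        - (E (Finset.univ.erase i) (k-1) x * esymm n l x
          - esymm n k x * E (Finset.univ.erase i) (l-1) x)
        = (x i - x j) * (Wk * esymm n l x - esymm n k x * Wl) := by
      have e1 : E (Finset.univ.erase j) (k-1) x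
          = E (Finset.univ.erase i) (k-1) x + (x i - x j) * Wk := by
        rw [hWk]; linarith [hdiffk]
      have e2 : E (Finset.univ.erase j) (l-1) x
          = E (Finset.univ.erase i) (l-1) x + (x i - x j) * Wl := by
        rw [hWl]; linarith [hdiffl]
      rw [e1, e2]
      ring
    have hgoal : 0 ≤ (x i - x j) * (Wk * esymm n l x - esymm n k x * Wl) := by
      have h1 : 0 ≤ x i - x j := by linarith
      have h2 : 0 ≤ Wk * esymm n l x - esymm n k x * Wl := by linarith [hbracket]
      positivity
    linarith [hfinal, hgoal]
end Fii

/-- If the eigenvalues λ(U) ∈ Γ_k of a diagonal matrix are ordered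
U_{11} ≥ U_{22} ≥ ⋯ ≥ U_{nn}, 0 ≤ l ≤ k-1, k ≥ 3, then the diagonal derivatives of
F = [σ_k/σ_l]^{1/(k-l)} satisfy F^{11} ≤ F^{22} ≤ ⋯ ≤ F^{nn}, where F^{ii} is the
i-th partial derivative of F as a function of the eigenvalues. -/
theorem Fii_monotone (n k l : ℕ) (hk3 : 3 ≤ k) (hkn : k ≤ n) (hl : l + 1 ≤ k)
    (x : Fin n → ℝ) (hx : x ∈ gardingCone n k)
    (hord : ∀ i j : Fin n, i ≤ j → x j ≤ x i)
    (i j : Fin n) (hij : i ≤ j) :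
    (1 / ((k : ℝ) - (l : ℝ))) *
        (esymm n k x / esymm n l x) ^ ((1 : ℝ) / ((k : ℝ) - (l : ℝ)) - 1) *
        ((esymmDel n (k - 1) x i * esymm n l x -
            esymm n k x * esymmDelZ n ((l : ℤ) - 1) x i) / (esymm n l x) ^ 2) ≤
      (1 / ((k : ℝ) - (l : ℝ))) *
        (esymm n k x / esymm n l x) ^ ((1 : ℝ) / ((k : ℝ) - (l : ℝ)) - 1) *
        ((esymmDel n (k - 1) x j * esymm n l x -
            esymm n k x * esymmDelZ n ((l : ℤ) - 1) x j) / (esymm n l x) ^ 2) := by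
  have hmain := Fii.main_mono n k l hk3 hkn hl x hx hord i j hij
  have hsigl : 0 < esymm n l x := by
    rcases Nat.eq_zero_or_pos l with h0 | h0
    · rw [h0, Fii.esymm_eq_E, Fii.E_zero]; norm_num
    · exact hx l h0 (by omega)
  have hsigk : 0 < esymm n k x := hx k (by omega) le_rfl
  have hc : 0 ≤ (1 / ((k : ℝ) - (l : ℝ))) *
      (esymm n k x / esymm n l x) ^ ((1 : ℝ) / ((k : ℝ) - (l : ℝ)) - 1) := by
    have hkl : 0 < (k : ℝ) - (l : ℝ) := by
      have : (l:ℝ) + 1 ≤ (k:ℝ) := by exact_mod_cast hl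
      linarith
    have h1 : (0:ℝ) ≤ 1 / ((k : ℝ) - (l : ℝ)) := by positivity
    have h2 : (0:ℝ) ≤ (esymm n k x / esymm n l x) ^ ((1 : ℝ) / ((k : ℝ) - (l : ℝ)) - 1) :=
      Real.rpow_nonneg (by positivity) _
    positivity
  have hdiv : (esymmDel n (k - 1) x i * esymm n l x -
        esymm n k x * esymmDelZ n ((l : ℤ) - 1) x i) / (esymm n l x) ^ 2
      ≤ (esymmDel n (k - 1) x j * esymm n l x -
        esymm n k x * esymmDelZ n ((l : ℤ) - 1) x j) / (esymm n l x) ^ 2 := by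
    have hsq : (0:ℝ) < (esymm n l x)^2 := by positivity
    exact (div_le_div_iff_of_pos_right hsq).mpr hmain
  exact mul_le_mul_of_nonneg_left hdiv hc
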